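/- Let f : ℝⁿ → ℝ be differentiable and μ-strongly convex (μ ≥ 0), Ψ : ℝⁿ → ℝ ∪ {∞} proper lsc convex, L > 0, y ∈ ℝⁿ, and x⁺ = T_{f,Ψ,L}(y) the proximal gradient step. Assume the descent condition f(x⁺) ≤ f(y) + ⟨∇f(y), x⁺ − y⟩ + (L/2)‖x⁺ − y‖² holds. Then for all x ∈ ℝⁿ, F(x) ≥ F(x⁺) + (1/(2L))‖g_L(y)‖² + ⟨g_L(y), x − y⟩ + (μ/2)‖x − y‖², where g_L(y) = L(y − x⁺) and F = f + Ψ. -/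

import Mathlib

open RealInnerProductSpace

theorem relaxed_supporting_generalized_parabola {n : ℕ}
    (f Ψ : EuclideanSpace ℝ (Fin n) → ℝ)
    (hf : Differentiable ℝ f)
    (μ : ℝ) (hμ : 0 ≤ μ)
    (hfsc : ∀ x y, f x ≥ f y + ⟪gradient f y, x - y⟫ + μ / 2 * ‖x - y‖ ^ 2)
    (hΨconv : ConvexOn ℝ Set.univ Ψ) (hΨlsc : LowerSemicontinuous Ψ)
    (L : ℝ) (hL : 0 < L) (y xp : EuclideanSpace ℝ (Fin n))
    (hmin : ∀ x, f y + ⟪gradient f y, xp - y⟫ + L / 2 * ‖xp - y‖ ^ 2 + Ψ xp ≤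
                 f y + ⟪gradient f y, x - y⟫ + L / 2 * ‖x - y‖ ^ 2 + Ψ x)
    (hdesc : f xp ≤ f y + ⟪gradient f y, xp - y⟫ + L / 2 * ‖xp - y‖ ^ 2) :
    ∀ x, f x + Ψ x ≥ (f xp + Ψ xp) + 1 / (2 * L) * ‖L • (y - xp)‖ ^ 2 +
      ⟪L • (y - xp), x - y⟫ + μ / 2 * ‖x - y‖ ^ 2 := by
  intro x
  set g : EuclideanSpace ℝ (Fin n) := gradient f y with hg
  -- Subgradient-type inequality for Ψ at xp
  have hsub : Ψ xp ≤ Ψ x + ⟪g, x - xp⟫ + L * ⟪xp - y, x - xp⟫ := by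
    set D : ℝ := L / 2 * ‖x - xp‖ ^ 2 with hD
    have hD0 : 0 ≤ D := by positivity
    have key : ∀ t : ℝ, 0 < t → t ≤ 1 →
        Ψ xp ≤ Ψ x + ⟪g, x - xp⟫ + L * ⟪xp - y, x - xp⟫ + t * D := by
      intro t ht0 ht1
      have hz := hmin ((1 - t) • xp + t • x)
      have hconv := hΨconv.2 (Set.mem_univ xp) (Set.mem_univ x)
        (by linarith : (0:ℝ) ≤ 1 - t) ht0.le (by ring)
      have hzy : ((1 - t) • xp + t • x) - y = (xp - y) + t • (x - xp) := by
        module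
      have hnorm : ‖((1 - t) • xp + t • x) - y‖ ^ 2
          = ‖xp - y‖ ^ 2 + 2 * (t * ⟪xp - y, x - xp⟫) + t ^ 2 * ‖x - xp‖ ^ 2 := by
        rw [hzy, @norm_add_sq_real, real_inner_smul_right, norm_smul]
        simp [abs_of_pos ht0]
        ring
      have hinner : ⟪g, ((1 - t) • xp + t • x) - y⟫
          = ⟪g, xp - y⟫ + t * ⟪g, x - xp⟫ := by
        rw [hzy, inner_add_right, real_inner_smul_right]
      rw [hinner, hnorm] at hz
      simp only [smul_eq_mul] at hconv
      rw [hD]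
      have hz' : t * Ψ xp ≤ t * (Ψ x + ⟪g, x - xp⟫ + L * ⟪xp - y, x - xp⟫ + t * (L / 2 * ‖x - xp‖ ^ 2)) := by
        nlinarith [hz, hconv]
      exact le_of_mul_le_mul_left (by linarith [hz']) ht0
    -- take t → 0
    refine le_of_forall_pos_le_add ?_
    intro ε hε
    have hDε : 0 < D + 1 := by linarith
    set t : ℝ := min 1 (ε / (D + 1)) with htdef
    have ht0 : 0 < t := lt_min one_pos (div_pos hε hDε)
    have ht1 : t ≤ 1 := min_le_left _ _
    have htD : t * D ≤ ε := by
      have h1 : t ≤ ε / (D + 1) := min_le_right _ _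
      have : t * D ≤ (ε / (D + 1)) * (D + 1) := by
        have : t * D ≤ t * (D + 1) := by nlinarith
        nlinarith [mul_le_mul_of_nonneg_right h1 (by linarith : (0:ℝ) ≤ D + 1)]
      rw [div_mul_cancel₀ ε (ne_of_gt hDε)] at this
      linarith
    have := key t ht0 ht1
    linarith
  -- Linear algebra identities
  have e1 : ⟪g, x - y⟫ = ⟪g, x - xp⟫ + ⟪g, xp - y⟫ := by
    rw [← inner_add_right, sub_add_sub_cancel]
  have e2 : ⟪xp - y, x - xp⟫ = -⟪y - xp, x - y⟫ - ‖y - xp‖ ^ 2 := by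
    have : (xp - y : EuclideanSpace ℝ (Fin n)) = -(y - xp) := by abel
    rw [this, inner_neg_left, ← real_inner_self_eq_norm_sq]
    have : (x - xp : EuclideanSpace ℝ (Fin n)) = (x - y) + (y - xp) := by abel
    rw [this, inner_add_right]
    ring
  have e3 : ⟪L • (y - xp), x - y⟫ = L * ⟪y - xp, x - y⟫ := real_inner_smul_left _ _ _
  have e4 : ‖L • (y - xp)‖ ^ 2 = L ^ 2 * ‖y - xp‖ ^ 2 := by
    rw [norm_smul]
    simp [abs_of_pos hL]
    ring
  have e5 : ‖xp - y‖ = ‖y - xp‖ := norm_sub_rev _ _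
  have hf1 := hfsc x y
  rw [e5, e4] at *
  have hL' : 1 / (2 * L) * (L ^ 2 * ‖y - xp‖ ^ 2) = L / 2 * ‖y - xp‖ ^ 2 := by
    field_simp
  rw [hL', e3]
  rw [e2] at hsub
  rw [e1] at hf1
  have e5sq : ‖xp - y‖ ^ 2 = ‖y - xp‖ ^ 2 := by rw [norm_sub_rev]
  nlinarith [hsub, hf1, hdesc, e5sq]
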